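/- The ideal closure operator C^I is idempotent (the closure of the closure of every subpresheaf G of every presheaf F equals the closure of G) if and only if the ideal I is idempotent, i.e., I² = I. -/

import Mathlib

open CategoryTheory Opposite CategoryTheory.GrothendieckTopology

universe v u

variable {C : Type u} [Category.{v} C]

/-- An ideal of the presheaf category on `C`: a family of sieves `I(X)` such that
`f ∘ g ∈ I(D)` whenever `f : X ⟶ D` and `g ∈ I(X)`. -/
structure CIdeal (C : Type u) [Category.{v} C] where
  sieve : ∀ X : C, Sieve X
  comp : ∀ ⦃X D : C⦄ (f : X ⟶ D) ⦃Y : C⦄ (g : Y ⟶ X), sieve X g → sieve D (g ≫ f)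

/-- `I²(X) = { f ∘ g | f ∈ I(X), g ∈ I(dom f) }`. -/
def CIdeal.sq (I : CIdeal C) (X : C) : ∀ ⦃Y : C⦄, (Y ⟶ X) → Prop :=
  fun _Y h => ∃ (Z : C) (f : Z ⟶ X) (g : _Y ⟶ Z), I.sieve X f ∧ I.sieve Z g ∧ h = g ≫ f

/-- The `I`-closure of a family of subsets of the values of a presheaf `F`. -/
def CIdeal.cl (I : CIdeal C) (F : Cᵒᵖ ⥤ Type v)
    (G : ∀ X : C, Set (F.obj (op X))) (X : C) : Set (F.obj (op X)) :=
  {x | ∀ ⦃Y : C⦄ (f : Y ⟶ X), I.sieve X f → F.map f.op x ∈ G Y}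

/-- `I²` as a subpresheaf of `yoneda.obj X`. -/
def CIdeal.sqSub (I : CIdeal C) (X : C) : Subfunctor (yoneda.obj X) where
  obj Y := {u | I.sq X u}
  map := by
    rintro U V i u ⟨Z, f, g, hf, hg, rfl⟩
    exact ⟨Z, f, i.unop ≫ g, hf, (I.sieve Z).downward_closed hg _, by simp⟩

/-- the ideal closure operator is idempotent on all subpresheaves of all
presheaves if and only if the ideal `I` is idempotent, i.e. `I² = I`. -/
theorem cl_idempotent_iff_ideal_idempotent (I : CIdeal C) :
    (∀ (F : Cᵒᵖ ⥤ Type v) (G : Subfunctor F) (X : C),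
        I.cl F (fun Y => I.cl F (fun Z => G.obj (op Z)) Y) X
          = I.cl F (fun Y => G.obj (op Y)) X)
      ↔ (∀ (X : C) ⦃Y : C⦄ (h : Y ⟶ X), I.sq X h ↔ I.sieve X h) := by
  constructor
  · intro H X Y h
    constructor
    · rintro ⟨Z, f, g, hf, hg, rfl⟩
      exact I.comp f g hg
    · intro hh
      have key := H (yoneda.obj X) (I.sqSub X) X
      have hid : (𝟙 X) ∈ I.cl (yoneda.obj X)
          (fun Y => I.cl (yoneda.obj X) (fun Z => (I.sqSub X).obj (op Z)) Y) X := by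
        intro Y f hf W g hg
        exact ⟨Y, f, g, hf, hg, by simp⟩
      rw [key] at hid
      have := hid h hh
      simpa [CIdeal.sqSub, CIdeal.sq] using this
  · intro H F G X
    ext x
    constructor
    · intro hx Y f hf
      obtain ⟨Z, f', g, hf', hg, rfl⟩ := (H X f).mpr hf
      have := hx f' hf' g hg
      simpa [FunctorToTypes.map_comp_apply] using this
    · intro hx Y f hf W g hg
      have := hx (g ≫ f) (I.comp f g hg)
      simpa [FunctorToTypes.map_comp_apply] using this
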